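/- arXiv:2206.05560 — 4 statements merged into one kernel-verified Lean document; each statement's English description precedes it below -/
import Mathlib

section
/- Let p be a prime and let P = X^g + a_{g−1}X^{g−1} + ⋯ + a_1 X + a_0 ∈ ℤ_p[X] be a monic polynomial of degree g ≥ 1 (set a_g = 1). Let S = ℤ_p[X]/(P) with π the image of X, and let M be any S-module. Define Φ : M → M ⊗_{ℤ_p} S by Φ(m) = Σ_{i=0}^{g−1} ((Σ_{k=i+1}^{g} a_k π^{k−i−1}) • m) ⊗ π^i. Then Φ is an injective ℤ_p-linear map whose image is exactly the set of x ∈ M ⊗_{ℤ_p} S satisfying (π • ⊗ id)(x) = (id ⊗ (π·))(x); that is, Φ is a ℤ_p-linear bijection from M onto the common-eigenvector submodule {x ∈ M ⊗_{ℤ_p} S : the action of π through the M-factor on x equals multiplication by 1 ⊗ π on x}. -/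
open TensorProduct
open Polynomial

set_option maxHeartbeats 1000000

/-- Let `P = X^g + a_{g-1}X^{g-1} + ⋯ + a_0 ∈ ℤ_p[X]` be monic of degree
`g ≥ 1`, let `S = ℤ_p[X]/(P)` with `π` the image of `X`, and let `M` be any `S`-module.
The `ℤ_p`-linear map `Φ : M → M ⊗_{ℤ_p} S`,
`Φ(m) = Σ_{i=0}^{g-1} ((Σ_{k=i+1}^{g} a_k π^{k-i-1}) • m) ⊗ π^i`, is injective with image
exactly the set of `x` on which the action of `π` through `M` agrees with multiplication
by `π` on the second tensor factor. -/
theorem eigenvector_map_injective_range (p : ℕ) [Fact p.Prime] (g : ℕ) (hg : 1 ≤ g)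
    (P : Polynomial ℤ_[p]) (hmonic : P.Monic) (hdeg : P.natDegree = g)
    (M : Type*) [AddCommGroup M] [Module ℤ_[p] M] [Module (AdjoinRoot P) M]
    [IsScalarTower ℤ_[p] (AdjoinRoot P) M]
    (Φ : M →ₗ[ℤ_[p]] M ⊗[ℤ_[p]] AdjoinRoot P)
    (hΦ : ∀ m : M, Φ m = ∑ i ∈ Finset.range g,
      ((∑ k ∈ Finset.Icc (i + 1) g, P.coeff k • AdjoinRoot.root P ^ (k - i - 1)) • m)
        ⊗ₜ[ℤ_[p]] (AdjoinRoot.root P ^ i)) :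
    Function.Injective Φ ∧
      Set.range Φ =
        {x : M ⊗[ℤ_[p]] AdjoinRoot P |
          LinearMap.rTensor (AdjoinRoot P)
              ((LinearMap.lsmul (AdjoinRoot P) M (AdjoinRoot.root P)).restrictScalars ℤ_[p]) x =
            LinearMap.lTensor M (LinearMap.mulLeft ℤ_[p] (AdjoinRoot.root P)) x} := by
  classical
  set S := AdjoinRoot P with hS
  set π := AdjoinRoot.root P with hπ
  let c : ℕ → S := fun i => ∑ k ∈ Finset.Icc (i + 1) g, P.coeff k • π ^ (k - i - 1)
  have hc : ∀ i, c i = ∑ k ∈ Finset.Icc (i + 1) g, P.coeff k • π ^ (k - i - 1) := fun _ => rfl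
  let d : S →ₗ[ℤ_[p]] Polynomial ℤ_[p] := AdjoinRoot.modByMonicHom hmonic
  let ℓ : ℕ → (S →ₗ[ℤ_[p]] ℤ_[p]) := fun i => (Polynomial.lcoeff ℤ_[p] i).comp d
  let φ : ℕ → (M ⊗[ℤ_[p]] S →ₗ[ℤ_[p]] M) := fun i =>
    (TensorProduct.rid ℤ_[p] M).toLinearMap.comp (LinearMap.lTensor M (ℓ i))
  have hφ_tmul : ∀ (i : ℕ) (m : M) (s : S), φ i (m ⊗ₜ s) = (d s).coeff i • m := by
    intro i m s; simp [φ, ℓ]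
  -- basis and coordinate equivalence
  let pb := AdjoinRoot.powerBasis' hmonic
  have hdim : pb.dim = g := by rw [AdjoinRoot.powerBasis'_dim, hdeg]
  let b : Module.Basis (Fin g) ℤ_[p] S := pb.basis.reindex (finCongr hdim)
  have hb : ∀ j : Fin g, b j = π ^ (j : ℕ) := by
    intro j
    simp only [b, Module.Basis.reindex_apply, pb.basis_eq_pow]
    rfl
  have hrepr : ∀ (s : S) (i : Fin g), b.repr s i = (d s).coeff (i : ℕ) := by
    intro s i
    rw [Module.Basis.repr_reindex_apply]
    rfl
  let E : M ⊗[ℤ_[p]] S ≃ₗ[ℤ_[p]] (Fin g →₀ M) :=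
    (LinearEquiv.lTensor M b.repr).trans (finsuppScalarRight ℤ_[p] ℤ_[p] M (Fin g))
  have hE : ∀ (x : M ⊗[ℤ_[p]] S) (i : Fin g), E x i = φ (i : ℕ) x := by
    intro x i
    induction x using TensorProduct.induction_on with
    | zero => simp
    | tmul m s =>
        simp [E, LinearEquiv.lTensor, hφ_tmul, hrepr,
          TensorProduct.finsuppScalarRight_apply_tmul_apply]
    | add x y hx hy => simp [map_add, hx, hy]
  have hsep : ∀ x y : M ⊗[ℤ_[p]] S, (∀ i : ℕ, i < g → φ i x = φ i y) → x = y := by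
    intro x y h
    apply E.injective
    ext i
    rw [hE, hE]
    exact h i i.isLt
  -- d on powers
  have hdpow : ∀ j : ℕ, j < g → d (π ^ j) = X ^ j := by
    intro j hj
    have h1 : π ^ j = AdjoinRoot.mk P (X ^ j) := by
      rw [map_pow, AdjoinRoot.mk_X]
    rw [h1]
    show AdjoinRoot.modByMonicHom hmonic (AdjoinRoot.mk P (X ^ j)) = X ^ j
    rw [AdjoinRoot.modByMonicHom_mk, Polynomial.modByMonic_eq_self_iff hmonic,
      degree_X_pow, degree_eq_natDegree hmonic.ne_zero, hdeg]
    exact_mod_cast hj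
  have hdpowg : d (π ^ g) = X ^ g - P := by
    have h1 : π ^ g = AdjoinRoot.mk P (X ^ g - P) := by
      rw [map_sub, AdjoinRoot.mk_self, sub_zero, map_pow, AdjoinRoot.mk_X]
    rw [h1]
    show AdjoinRoot.modByMonicHom hmonic (AdjoinRoot.mk P (X ^ g - P)) = X ^ g - P
    rw [AdjoinRoot.modByMonicHom_mk, Polynomial.modByMonic_eq_self_iff hmonic]
    have h2 : degree (X ^ g - P) < degree ((X : Polynomial ℤ_[p]) ^ g) := by
      apply degree_sub_lt
      · rw [degree_X_pow, degree_eq_natDegree hmonic.ne_zero, hdeg]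
      · exact pow_ne_zero _ X_ne_zero
      · rw [leadingCoeff_X_pow, hmonic.leadingCoeff]
    calc degree (X ^ g - P) < degree ((X : Polynomial ℤ_[p]) ^ g) := h2
      _ = degree P := by rw [degree_X_pow, degree_eq_natDegree hmonic.ne_zero, hdeg]
  have hcoeffg : P.coeff g = 1 := by rw [← hdeg]; exact hmonic.coeff_natDegree
  have hℓ : ∀ (k : ℕ) (s : S), ℓ k s = (d s).coeff k := fun _ _ => rfl
  -- multiplication-by-π coefficient formula
  have hdmul : ∀ (i : ℕ) (s : S), (d (π * s)).coeff i
      = (if i = 0 then (0 : ℤ_[p]) else (d s).coeff (i - 1))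
        - P.coeff i * (d s).coeff (g - 1) := by
    intro i s
    have h : ((ℓ i).comp (LinearMap.mulLeft ℤ_[p] π))
        = (if i = 0 then 0 else ℓ (i - 1)) - (P.coeff i) • ℓ (g - 1) := by
      apply Module.Basis.ext (b := b)
      intro j
      have hjl : (j : ℕ) < g := j.isLt
      rw [hb j]
      simp only [LinearMap.comp_apply, LinearMap.mulLeft_apply, LinearMap.sub_apply,
        LinearMap.smul_apply, smul_eq_mul,
        apply_ite (fun (f : S →ₗ[ℤ_[p]] ℤ_[p]) => f (π ^ (j : ℕ))),
        LinearMap.zero_apply, hℓ]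
      rw [show π * π ^ (j : ℕ) = π ^ ((j : ℕ) + 1) from (pow_succ' π _).symm]
      by_cases hj : (j : ℕ) + 1 < g
      · rw [hdpow _ hj, hdpow _ (show (j : ℕ) < g by omega)]
        simp only [coeff_X_pow]
        rw [if_neg (show ¬ (g - 1 = (j : ℕ)) by omega), mul_zero, sub_zero]
        split_ifs <;> first | rfl | omega
      · have hjg : (j : ℕ) + 1 = g := by omega
        rw [hjg, hdpowg, hdpow _ hjl]
        simp only [coeff_sub, coeff_X_pow]
        rw [if_pos (show g - 1 = (j : ℕ) by omega), mul_one]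
        have hsplit : (if i = 0 then (0:ℤ_[p]) else if i - 1 = (j:ℕ) then 1 else 0)
            = (if i = g then 1 else 0) := by
          split_ifs <;> first | rfl | omega
        rw [hsplit]
    have h2 := LinearMap.congr_fun h s
    simpa only [LinearMap.comp_apply, LinearMap.mulLeft_apply, LinearMap.sub_apply,
      LinearMap.smul_apply, smul_eq_mul,
      apply_ite (fun (f : S →ₗ[ℤ_[p]] ℤ_[p]) => f s), LinearMap.zero_apply, hℓ] using h2
  -- φ versus the two sides of the eigen equation
  have hφ_rT : ∀ (i : ℕ) (x : M ⊗[ℤ_[p]] S),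
      φ i (LinearMap.rTensor S
        ((LinearMap.lsmul S M π).restrictScalars ℤ_[p]) x) = π • φ i x := by
    intro i x
    induction x using TensorProduct.induction_on with
    | zero => simp
    | tmul m s =>
        rw [LinearMap.rTensor_tmul]
        simp only [LinearMap.coe_restrictScalars, LinearMap.lsmul_apply]
        rw [hφ_tmul, hφ_tmul]
        rw [smul_comm]
    | add x y hx hy => simp only [map_add, hx, hy, smul_add]
  have hφ_lT : ∀ (i : ℕ) (x : M ⊗[ℤ_[p]] S),
      φ i (LinearMap.lTensor M (LinearMap.mulLeft ℤ_[p] π) x)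
        = (if i = 0 then 0 else φ (i - 1) x) - P.coeff i • φ (g - 1) x := by
    intro i x
    induction x using TensorProduct.induction_on with
    | zero => simp
    | tmul m s =>
        rw [LinearMap.lTensor_tmul, LinearMap.mulLeft_apply]
        rw [hφ_tmul, hφ_tmul, hφ_tmul, hdmul]
        rw [sub_smul, mul_smul, ite_smul, zero_smul]
    | add x y hx hy =>
        simp only [map_add, hx, hy]
        split_ifs <;> simp only [smul_add] <;> abel
  -- φ of Φ
  have hφ_Φ : ∀ (i : ℕ) (m : M), φ i (Φ m) = c i • m := by
    intro i m
    rw [hΦ, map_sum]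
    by_cases hi : i < g
    · rw [Finset.sum_eq_single i]
      · rw [hφ_tmul, hdpow _ hi, coeff_X_pow, if_pos rfl, one_smul]
      · intro j hjr hji
        rw [hφ_tmul, hdpow _ (Finset.mem_range.mp hjr), coeff_X_pow,
          if_neg (fun hh => hji hh.symm), zero_smul]
      · intro hni
        exact absurd (Finset.mem_range.mpr hi) hni
    · have hz : ∀ j ∈ Finset.range g, φ i ((c j • m) ⊗ₜ[ℤ_[p]] (π ^ j)) = 0 := by
        intro j hjr
        rw [hφ_tmul, hdpow _ (Finset.mem_range.mp hjr), coeff_X_pow,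
          if_neg (by have := Finset.mem_range.mp hjr; omega), zero_smul]
      rw [Finset.sum_congr rfl hz, Finset.sum_const, smul_zero]
      have : c i = 0 := by
        rw [hc, Finset.Icc_eq_empty (by omega), Finset.sum_empty]
      rw [this, zero_smul]
  -- recurrence for c
  have hcrec : ∀ i : ℕ, i + 1 ≤ g → c i = π * c (i + 1) + P.coeff (i + 1) • 1 := by
    intro i hi
    rw [hc, hc, ← Finset.Ioc_insert_left hi, Finset.sum_insert (by simp),
      show i + 1 - i - 1 = 0 by omega, pow_zero, ← Finset.Icc_add_one_left_eq_Ioc, Finset.mul_sum,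
      add_comm]
    congr 1
    apply Finset.sum_congr rfl
    intro k hk
    have hk2 : i + 1 + 1 ≤ k := (Finset.mem_Icc.mp hk).1
    rw [mul_smul_comm, ← pow_succ']
    congr 2
    omega
  have hctop : c (g - 1) = 1 := by
    rw [hc, show g - 1 + 1 = g by omega, Finset.Icc_self, Finset.sum_singleton, hcoeffg,
      show g - (g - 1) - 1 = 0 by omega, pow_zero, one_smul]
  have hczero : π * c 0 + P.coeff 0 • (1 : S) = 0 := by
    have h0 : (Polynomial.aeval π) P = (0 : S) := by
      rw [AdjoinRoot.aeval_eq, AdjoinRoot.mk_self]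
    rw [Polynomial.aeval_eq_sum_range, hdeg] at h0
    rw [hc, Finset.mul_sum]
    have h1 : ∀ k ∈ Finset.Icc 1 g, π * (P.coeff k • π ^ (k - 0 - 1)) = P.coeff k • π ^ k := by
      intro k hk
      have hk1 : 1 ≤ k := (Finset.mem_Icc.mp hk).1
      rw [mul_smul_comm, ← pow_succ']
      congr 2
      omega
    rw [Finset.sum_congr rfl h1, ← pow_zero π, add_comm, show Finset.Icc 1 g = Finset.Ioc 0 g from Finset.Icc_add_one_left_eq_Ioc 0 g,
      ← Finset.sum_insert (f := fun k => P.coeff k • π ^ k) (show (0:ℕ) ∉ Finset.Ioc 0 g by simp),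
      Finset.Ioc_insert_left (Nat.zero_le g),
      show Finset.Icc 0 g = Finset.range (g + 1) by
        rw [Finset.range_eq_Ico, Finset.Ico_add_one_right_eq_Icc]]
    exact h0
  -- auxiliary smul facts
  have hsmul1 : ∀ (r : ℤ_[p]) (m : M), (r • (1 : S)) • m = r • m := by
    intro r m
    rw [smul_assoc, one_smul]
  -- MAIN PROOF
  constructor
  · intro m m' hmm
    have h1 := congrArg (φ (g - 1)) hmm
    rw [hφ_Φ, hφ_Φ, hctop, one_smul, one_smul] at h1
    exact h1
  · apply Set.ext
    intro x
    simp only [Set.mem_setOf_eq, Set.mem_range]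
    constructor
    · rintro ⟨m, rfl⟩
      apply hsep
      intro i hi
      rw [hφ_rT, hφ_lT, hφ_Φ, hφ_Φ, hφ_Φ, hctop, one_smul]
      by_cases hi0 : i = 0
      · subst hi0
        rw [if_pos rfl, zero_sub, smul_smul]
        have : π * c 0 = -(P.coeff 0 • (1 : S)) := by
          rw [eq_neg_iff_add_eq_zero]; exact hczero
        rw [this, neg_smul, hsmul1]
      · rw [if_neg hi0, smul_smul]
        have h2 := hcrec (i - 1) (by omega)
        rw [show i - 1 + 1 = i by omega] at h2
        rw [h2, add_smul, hsmul1, add_sub_cancel_right]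
    · intro hx
      refine ⟨φ (g - 1) x, ?_⟩
      apply hsep
      intro i hi
      rw [hφ_Φ]
      have key : ∀ j : ℕ, j ≤ g - 1 → φ (g - 1 - j) x = c (g - 1 - j) • (φ (g - 1) x) := by
        intro j
        induction j with
        | zero =>
            intro _
            rw [Nat.sub_zero, hctop, one_smul]
        | succ j ih =>
            intro hj
            have ihv := ih (by omega)
            have heig := congrArg (φ (g - 1 - j)) hx
            rw [hφ_rT, hφ_lT, if_neg (show ¬ (g - 1 - j = 0) by omega)] at heig
            rw [show g - 1 - j - 1 = g - 1 - (j + 1) by omega] at heig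
            rw [ihv] at heig
            -- heig : π • (c (g-1-j) • φ (g-1) x) = φ (g-1-(j+1)) x - P.coeff (g-1-j) • φ (g-1) x
            have h3 : φ (g - 1 - (j + 1)) x
                = π • (c (g - 1 - j) • φ (g - 1) x) + P.coeff (g - 1 - j) • φ (g - 1) x := by
              rw [heig, sub_add_cancel]
            rw [h3, smul_smul]
            have h4 := hcrec (g - 1 - (j + 1)) (by omega)
            rw [show g - 1 - (j + 1) + 1 = g - 1 - j by omega] at h4
            rw [h4, add_smul, hsmul1]
      have h5 := key (g - 1 - i) (by omega)
      rw [show g - 1 - (g - 1 - i) = i by omega] at h5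
      exact h5.symm
end

section
/- Let p be a prime and let P = X^g + a_{g−1}X^{g−1} + ⋯ + a_0 ∈ ℤ_p[X] be a monic polynomial of degree g ≥ 1 (set a_g = 1) which is Eisenstein at p (p divides a_i for all i < g and p² does not divide a_0). Let S = ℤ_p[X]/(P) with π the image of X. Let B : S × S → ℤ_p be a ℤ_p-bilinear form such that B(t·x, y) = B(x, t·y) for all t, x, y ∈ S and such that B is perfect, i.e., the induced ℤ_p-linear map S → Hom_{ℤ_p}(S, ℤ_p), x ↦ B(x, ·), is bijective. Let e := Σ_{i=0}^{g−1} (Σ_{k=i+1}^{g} a_k π^{k−i−1}) ⊗ π^i ∈ S ⊗_{ℤ_p} S, and let B_S denote the S-valued extension of B determined by B_S(x ⊗ a, y ⊗ b) = B(x, y)·a·b. Then for all units u, u′ ∈ S^×, the element B_S((u ⊗ 1)·e, (u′ ⊗ 1)·e) ∈ S is an associate of P′(π) (the value at π of the derivative of P) in S. -/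
open TensorProduct

namespace PairingAux

open Polynomial AdjoinRoot Finset

variable {R : Type*} [CommRing R] {S : Type*} [CommRing S] [Algebra R S]

lemma BS_one_tmul_left (B : S →ₗ[R] S →ₗ[R] R)
    (BS : (S ⊗[R] S) →ₗ[R] (S ⊗[R] S) →ₗ[R] S)
    (hBS : ∀ x a y b : S, BS (x ⊗ₜ[R] a) (y ⊗ₜ[R] b) = B x y • (a * b))
    (t : S) (u v : S ⊗[R] S) :
    BS (((1 : S) ⊗ₜ[R] t) * u) v = t * BS u v := by
  induction u using TensorProduct.induction_on with
  | zero => simp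
  | tmul x a =>
    rw [Algebra.TensorProduct.tmul_mul_tmul, one_mul]
    induction v using TensorProduct.induction_on with
    | zero => simp
    | tmul y b => rw [hBS, hBS, mul_smul_comm, mul_assoc]
    | add v₁ v₂ h₁ h₂ => simp only [map_add, h₁, h₂, mul_add]
  | add u₁ u₂ h₁ h₂ =>
    simp only [mul_add, map_add, LinearMap.add_apply, h₁, h₂]

lemma BS_one_tmul_right (B : S →ₗ[R] S →ₗ[R] R)
    (BS : (S ⊗[R] S) →ₗ[R] (S ⊗[R] S) →ₗ[R] S)
    (hBS : ∀ x a y b : S, BS (x ⊗ₜ[R] a) (y ⊗ₜ[R] b) = B x y • (a * b))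
    (t : S) (u v : S ⊗[R] S) :
    BS u (((1 : S) ⊗ₜ[R] t) * v) = t * BS u v := by
  induction v using TensorProduct.induction_on with
  | zero => simp
  | tmul y b =>
    rw [Algebra.TensorProduct.tmul_mul_tmul, one_mul]
    induction u using TensorProduct.induction_on with
    | zero => simp
    | tmul x a => rw [hBS, hBS, mul_smul_comm, mul_left_comm]
    | add u₁ u₂ h₁ h₂ => simp only [map_add, LinearMap.add_apply, h₁, h₂, mul_add]
  | add v₁ v₂ h₁ h₂ => simp only [mul_add, map_add, h₁, h₂]

lemma BS_adj (B : S →ₗ[R] S →ₗ[R] R)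
    (BS : (S ⊗[R] S) →ₗ[R] (S ⊗[R] S) →ₗ[R] S)
    (hBS : ∀ x a y b : S, BS (x ⊗ₜ[R] a) (y ⊗ₜ[R] b) = B x y • (a * b))
    (hsym : ∀ t x y : S, B (t * x) y = B x (t * y))
    (t : S) (u v : S ⊗[R] S) :
    BS ((t ⊗ₜ[R] (1 : S)) * u) v = BS u ((t ⊗ₜ[R] (1 : S)) * v) := by
  induction u using TensorProduct.induction_on with
  | zero => simp
  | tmul x a =>
    rw [Algebra.TensorProduct.tmul_mul_tmul, one_mul]
    induction v using TensorProduct.induction_on with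
    | zero => simp
    | tmul y b =>
      rw [Algebra.TensorProduct.tmul_mul_tmul, one_mul, hBS, hBS, hsym]
    | add v₁ v₂ h₁ h₂ => simp only [mul_add, map_add, h₁, h₂]
  | add u₁ u₂ h₁ h₂ =>
    simp only [mul_add, map_add, LinearMap.add_apply, h₁, h₂]

/-- The coefficients `c_i = ∑_j a_{i+1+j} π^j`. -/
noncomputable def cf (P : R[X]) (i : ℕ) : AdjoinRoot P :=
  ∑ j ∈ Finset.range (P.natDegree - i), P.coeff (i + 1 + j) • AdjoinRoot.root P ^ j

/-- The element `e`. -/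
noncomputable def eE (P : R[X]) : AdjoinRoot P ⊗[R] AdjoinRoot P :=
  ∑ i ∈ Finset.range P.natDegree, cf P i ⊗ₜ[R] (AdjoinRoot.root P ^ i)

lemma eE_def (P : R[X]) :
    eE P = ∑ i ∈ Finset.range P.natDegree, cf P i ⊗ₜ[R] (AdjoinRoot.root P ^ i) := rfl

lemma cf_eq (P : R[X]) (i : ℕ) :
    (∑ k ∈ Icc (i + 1) P.natDegree, P.coeff k • AdjoinRoot.root P ^ (k - i - 1)) = cf P i := by
  rw [cf, ← Finset.Ico_add_one_right_eq_Icc, Finset.sum_Ico_eq_sum_range]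
  have h : P.natDegree + 1 - (i + 1) = P.natDegree - i := by omega
  rw [h]
  exact Finset.sum_congr rfl fun j _ => by rw [show i + 1 + j - i - 1 = j from by omega]

lemma cf_last (P : R[X]) (hm : P.Monic) {n : ℕ} (hn : P.natDegree = n + 1) :
    cf P n = 1 := by
  rw [cf]
  have h : P.natDegree - n = 1 := by omega
  rw [h, Finset.sum_range_one, pow_zero]
  have h2 : n + 1 + 0 = P.natDegree := by omega
  rw [h2, hm.coeff_natDegree, one_smul]

lemma root_mul_cf_succ (P : R[X]) {i : ℕ} (hi : i < P.natDegree) :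
    root P * cf P (i + 1) = cf P i - P.coeff (i + 1) • 1 := by
  rw [cf, cf, Finset.mul_sum]
  have h : P.natDegree - i = (P.natDegree - (i + 1)) + 1 := by omega
  rw [h, Finset.sum_range_succ', add_zero, pow_zero, add_sub_cancel_right]
  refine Finset.sum_congr rfl fun j _ => ?_
  rw [mul_smul_comm, ← pow_succ', show i + 1 + 1 + j = i + 1 + (j + 1) from by omega]

lemma root_mul_cf_zero (P : R[X]) : root P * cf P 0 = -(P.coeff 0 • 1) := by
  have h0 : (aeval (root P) P : AdjoinRoot P) = 0 := by
    rw [AdjoinRoot.aeval_eq, AdjoinRoot.mk_self]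
  rw [Polynomial.aeval_eq_sum_range, Finset.sum_range_succ', pow_zero] at h0
  rw [cf, Nat.sub_zero, Finset.mul_sum]
  have h : ∀ j ∈ Finset.range P.natDegree,
      root P * (P.coeff (0 + 1 + j) • root P ^ j) = P.coeff (j + 1) • root P ^ (j + 1) := by
    intro j _
    rw [mul_smul_comm, ← pow_succ', show 0 + 1 + j = j + 1 from by omega]
  rw [Finset.sum_congr rfl h]
  exact eq_neg_of_add_eq_zero_left h0

lemma aeval_expand (P : R[X]) (hm : P.Monic) {n : ℕ} (hn : P.natDegree = n + 1) :
    AdjoinRoot.root P ^ (n + 1)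
      + ((∑ i ∈ Finset.range n, P.coeff (i + 1) • AdjoinRoot.root P ^ (i + 1))
          + P.coeff 0 • (1 : AdjoinRoot P)) = 0 := by
  have h0 : (aeval (root P) P : AdjoinRoot P) = 0 := by
    rw [AdjoinRoot.aeval_eq, AdjoinRoot.mk_self]
  rw [Polynomial.aeval_eq_sum_range, hn, Finset.sum_range_succ', Finset.sum_range_succ,
    pow_zero] at h0
  have hc : P.coeff (n + 1) = 1 := by rw [← hn]; exact hm.coeff_natDegree
  rw [hc, one_smul] at h0
  linear_combination h0

lemma key_root (P : R[X]) (hm : P.Monic) (hg : 1 ≤ P.natDegree) :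
    (root P ⊗ₜ[R] (1 : AdjoinRoot P)) * eE P
      = ((1 : AdjoinRoot P) ⊗ₜ[R] root P) * eE P := by
  obtain ⟨n, hn⟩ : ∃ n, P.natDegree = n + 1 := ⟨P.natDegree - 1, by omega⟩
  have hz0 := congrArg (fun s : AdjoinRoot P => (1 : AdjoinRoot P) ⊗ₜ[R] s)
    (aeval_expand P hm hn)
  simp only [TensorProduct.tmul_add, TensorProduct.tmul_sum, TensorProduct.tmul_smul,
    TensorProduct.tmul_zero] at hz0
  have hL : (root P ⊗ₜ[R] (1 : AdjoinRoot P)) * eE P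
      = ((∑ i ∈ Finset.range n, cf P i ⊗ₜ[R] (root P ^ (i + 1)))
          - ∑ i ∈ Finset.range n,
              P.coeff (i + 1) • ((1 : AdjoinRoot P) ⊗ₜ[R] (root P ^ (i + 1))))
        + (-(P.coeff 0 • ((1 : AdjoinRoot P) ⊗ₜ[R] (1 : AdjoinRoot P)))) := by
    rw [eE_def, Finset.mul_sum, hn]
    calc ∑ i ∈ Finset.range (n + 1),
            (root P ⊗ₜ[R] (1 : AdjoinRoot P)) * (cf P i ⊗ₜ[R] (root P ^ i))
        = ∑ i ∈ Finset.range (n + 1), (root P * cf P i) ⊗ₜ[R] (root P ^ i) := by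
          refine Finset.sum_congr rfl fun i _ => ?_
          rw [Algebra.TensorProduct.tmul_mul_tmul, one_mul]
      _ = (∑ i ∈ Finset.range n, (root P * cf P (i + 1)) ⊗ₜ[R] (root P ^ (i + 1)))
            + (root P * cf P 0) ⊗ₜ[R] (root P ^ 0) := Finset.sum_range_succ' _ n
      _ = _ := by
          rw [root_mul_cf_zero, pow_zero, TensorProduct.neg_tmul, ← TensorProduct.smul_tmul']
          congr 1
          rw [← Finset.sum_sub_distrib]
          refine Finset.sum_congr rfl fun i hi => ?_
          rw [root_mul_cf_succ P (by have := Finset.mem_range.1 hi; omega),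
            TensorProduct.sub_tmul, ← TensorProduct.smul_tmul']
  have hR : ((1 : AdjoinRoot P) ⊗ₜ[R] root P) * eE P
      = (∑ i ∈ Finset.range n, cf P i ⊗ₜ[R] (root P ^ (i + 1)))
          + (1 : AdjoinRoot P) ⊗ₜ[R] (root P ^ (n + 1)) := by
    rw [eE_def, Finset.mul_sum, hn]
    calc ∑ i ∈ Finset.range (n + 1),
            ((1 : AdjoinRoot P) ⊗ₜ[R] root P) * (cf P i ⊗ₜ[R] (root P ^ i))
        = ∑ i ∈ Finset.range (n + 1), cf P i ⊗ₜ[R] (root P ^ (i + 1)) := by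
          refine Finset.sum_congr rfl fun i _ => ?_
          rw [Algebra.TensorProduct.tmul_mul_tmul, one_mul, ← pow_succ']
      _ = _ := by rw [Finset.sum_range_succ, cf_last P hm hn]
  rw [hL, hR, eq_neg_of_add_eq_zero_left hz0, neg_add]
  abel

lemma key_pow (P : R[X]) (hm : P.Monic) (hg : 1 ≤ P.natDegree) (m : ℕ) :
    ((root P ^ m) ⊗ₜ[R] (1 : AdjoinRoot P)) * eE P
      = ((1 : AdjoinRoot P) ⊗ₜ[R] (root P ^ m)) * eE P := by
  induction m with
  | zero => rfl
  | succ m ih =>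
    calc ((root P ^ (m + 1)) ⊗ₜ[R] (1 : AdjoinRoot P)) * eE P
        = ((root P ^ m) ⊗ₜ[R] (1 : AdjoinRoot P))
            * ((root P ⊗ₜ[R] (1 : AdjoinRoot P)) * eE P) := by
          rw [← mul_assoc, Algebra.TensorProduct.tmul_mul_tmul, mul_one, ← pow_succ]
      _ = ((root P ^ m) ⊗ₜ[R] (1 : AdjoinRoot P))
            * (((1 : AdjoinRoot P) ⊗ₜ[R] root P) * eE P) := by
          rw [key_root P hm hg]
      _ = ((1 : AdjoinRoot P) ⊗ₜ[R] root P)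
            * (((root P ^ m) ⊗ₜ[R] (1 : AdjoinRoot P)) * eE P) := by
          ring
      _ = ((1 : AdjoinRoot P) ⊗ₜ[R] root P)
            * (((1 : AdjoinRoot P) ⊗ₜ[R] (root P ^ m)) * eE P) := by
          rw [ih]
      _ = ((1 : AdjoinRoot P) ⊗ₜ[R] (root P ^ (m + 1))) * eE P := by
          rw [← mul_assoc, Algebra.TensorProduct.tmul_mul_tmul, mul_one, ← pow_succ']

lemma key_comm (P : R[X]) (hm : P.Monic) (hg : 1 ≤ P.natDegree) (x : AdjoinRoot P) :
    (x ⊗ₜ[R] (1 : AdjoinRoot P)) * eE P = ((1 : AdjoinRoot P) ⊗ₜ[R] x) * eE P := by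
  obtain ⟨q, rfl⟩ := AdjoinRoot.mk_surjective x
  rw [← AdjoinRoot.aeval_eq, Polynomial.aeval_eq_sum_range, TensorProduct.sum_tmul,
    TensorProduct.tmul_sum, Finset.sum_mul, Finset.sum_mul]
  refine Finset.sum_congr rfl fun i _ => ?_
  rw [← TensorProduct.smul_tmul', TensorProduct.tmul_smul, smul_mul_assoc, smul_mul_assoc,
    key_pow P hm hg]

lemma sum_cf_mul (P : R[X]) (hg : P.natDegree ≠ 0) :
    ∑ i ∈ Finset.range P.natDegree, cf P i * root P ^ i
      = aeval (root P) (derivative P) := by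
  rw [Polynomial.aeval_eq_sum_range' (Polynomial.natDegree_derivative_lt hg) (root P)]
  have h1 : ∀ i ∈ Finset.range P.natDegree, cf P i * root P ^ i
      = ∑ m ∈ Finset.Ico i P.natDegree, P.coeff (m + 1) • root P ^ m := by
    intro i _
    rw [cf, Finset.sum_mul, Finset.sum_Ico_eq_sum_range]
    refine Finset.sum_congr rfl fun j _ => ?_
    rw [smul_mul_assoc, ← pow_add, show j + i = i + j from by omega,
      show i + 1 + j = i + j + 1 from by omega]
  rw [Finset.sum_congr rfl h1,
    Finset.sum_comm' (s := Finset.range P.natDegree) (t := fun i => Finset.Ico i P.natDegree)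
      (t' := Finset.range P.natDegree) (s' := fun m => Finset.range (m + 1))
      (fun i m => by simp only [Finset.mem_range, Finset.mem_Ico]; omega)]
  refine Finset.sum_congr rfl fun m _ => ?_
  rw [Finset.sum_const, Finset.card_range, Polynomial.coeff_derivative,
    ← Nat.cast_smul_eq_nsmul R, smul_smul]
  congr 1
  push_cast
  ring

lemma coord_cf (P : R[X]) (hm : P.Monic) {n : ℕ} (hn : P.natDegree = n + 1)
    (idx : Fin (AdjoinRoot.powerBasis' hm).dim) (hidx : (idx : ℕ) = n)
    {j : ℕ} (hj : j < P.natDegree) :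
    (AdjoinRoot.powerBasis' hm).basis.coord idx (cf P j) = if j = 0 then 1 else 0 := by
  have hdim : (AdjoinRoot.powerBasis' hm).dim = P.natDegree := by
    simp
  have hcoord : ∀ k, k < P.natDegree →
      (AdjoinRoot.powerBasis' hm).basis.coord idx (root P ^ k)
        = if k = n then 1 else 0 := by
    intro k hk
    have hb : (AdjoinRoot.powerBasis' hm).basis ⟨k, by rw [hdim]; exact hk⟩ = root P ^ k := by
      rw [(AdjoinRoot.powerBasis' hm).basis_eq_pow]
      simp
    rw [← hb, Module.Basis.coord_apply, Module.Basis.repr_self, Finsupp.single_apply]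
    simp [Fin.ext_iff, hidx]
  rw [cf, map_sum]
  have hterm : ∀ k ∈ Finset.range (P.natDegree - j),
      (AdjoinRoot.powerBasis' hm).basis.coord idx (P.coeff (j + 1 + k) • root P ^ k)
        = if k = n then P.coeff (j + 1 + k) else 0 := by
    intro k hk
    rw [map_smul, hcoord k (by have := Finset.mem_range.1 hk; omega), smul_eq_mul]
    split_ifs <;> simp
  rw [Finset.sum_congr rfl hterm]
  by_cases hj0 : j = 0
  · subst hj0
    rw [if_pos rfl, Finset.sum_ite_eq', if_pos (by rw [Finset.mem_range]; omega),
      show 0 + 1 + n = P.natDegree from by omega, hm.coeff_natDegree]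
  · rw [if_neg hj0, Finset.sum_eq_zero]
    intro k hk
    exact if_neg (by have := Finset.mem_range.1 hk; omega)

end PairingAux


/-- Let `P ∈ ℤ_p[X]` be monic of degree `g ≥ 1` and Eisenstein at `p`,
let `S = ℤ_p[X]/(P)` with `π` the image of `X`, and let `B` be a perfect `ℤ_p`-bilinear
form on `S` satisfying `B(t·x, y) = B(x, t·y)`.  With
`e = Σ_{i=0}^{g-1} (Σ_{k=i+1}^{g} a_k π^{k-i-1}) ⊗ π^i` and `B_S` the `S`-valued
extension of `B`, for all units `u, u′ ∈ S^×` the element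
`B_S((u ⊗ 1)·e, (u′ ⊗ 1)·e)` is an associate of `P′(π)` in `S`. -/
theorem pairing_eigenvectors_associated_derivative (p : ℕ) [Fact p.Prime]
    (g : ℕ) (hg : 1 ≤ g)
    (P : Polynomial ℤ_[p]) (hmonic : P.Monic) (hdeg : P.natDegree = g)
    (heis : ∀ i < g, (p : ℤ_[p]) ∣ P.coeff i) (heis0 : ¬ (p : ℤ_[p]) ^ 2 ∣ P.coeff 0)
    (B : AdjoinRoot P →ₗ[ℤ_[p]] AdjoinRoot P →ₗ[ℤ_[p]] ℤ_[p])
    (hsym : ∀ t x y : AdjoinRoot P, B (t * x) y = B x (t * y))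
    (hperf : Function.Bijective B)
    (BS : (AdjoinRoot P ⊗[ℤ_[p]] AdjoinRoot P) →ₗ[ℤ_[p]]
      (AdjoinRoot P ⊗[ℤ_[p]] AdjoinRoot P) →ₗ[ℤ_[p]] AdjoinRoot P)
    (hBS : ∀ x a y b : AdjoinRoot P,
      BS (x ⊗ₜ[ℤ_[p]] a) (y ⊗ₜ[ℤ_[p]] b) = B x y • (a * b))
    (e : AdjoinRoot P ⊗[ℤ_[p]] AdjoinRoot P)
    (he : e = ∑ i ∈ Finset.range g,
      (∑ k ∈ Finset.Icc (i + 1) g, P.coeff k • AdjoinRoot.root P ^ (k - i - 1))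
        ⊗ₜ[ℤ_[p]] (AdjoinRoot.root P ^ i))
    (u u' : (AdjoinRoot P)ˣ) :
    Associated
      (BS (((u : AdjoinRoot P) ⊗ₜ[ℤ_[p]] (1 : AdjoinRoot P)) * e)
        (((u' : AdjoinRoot P) ⊗ₜ[ℤ_[p]] (1 : AdjoinRoot P)) * e))
      (Polynomial.aeval (AdjoinRoot.root P) (Polynomial.derivative P)) := by
  subst hdeg
  have hg' : P.natDegree ≠ 0 := by omega
  obtain ⟨n, hn⟩ : ∃ n, P.natDegree = n + 1 := ⟨P.natDegree - 1, by omega⟩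
  have he' : e = PairingAux.eE P := by
    rw [he, PairingAux.eE_def]
    exact Finset.sum_congr rfl fun i _ => by rw [PairingAux.cf_eq]
  rw [he']
  have hLs := PairingAux.BS_one_tmul_left B BS hBS
  have hRs := PairingAux.BS_one_tmul_right B BS hBS
  have hAdj := PairingAux.BS_adj B BS hBS hsym
  have hK := PairingAux.key_comm P hmonic hg
  set w := BS ((1 : AdjoinRoot P) ⊗ₜ[ℤ_[p]] (1 : AdjoinRoot P)) (PairingAux.eE P) with hw
  have hphi : ∀ x : AdjoinRoot P, BS (x ⊗ₜ[ℤ_[p]] (1 : AdjoinRoot P)) (PairingAux.eE P) = x * w := by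
    intro x
    have h1 : (x ⊗ₜ[ℤ_[p]] (1 : AdjoinRoot P))
        = (x ⊗ₜ[ℤ_[p]] (1 : AdjoinRoot P))
          * ((1 : AdjoinRoot P) ⊗ₜ[ℤ_[p]] (1 : AdjoinRoot P)) := by
      rw [Algebra.TensorProduct.tmul_mul_tmul, mul_one, mul_one]
    rw [h1, hAdj, hK, hRs, hw]
  set pb := AdjoinRoot.powerBasis' hmonic with hpb
  have hdim : pb.dim = P.natDegree := by simp [hpb]
  obtain ⟨z, hz⟩ := hperf.2 (pb.basis.coord ⟨n, by rw [hdim, hn]; omega⟩)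
  have hzw : z * w = 1 := by
    rw [← hphi z, PairingAux.eE_def, map_sum]
    have hterm : ∀ i ∈ Finset.range P.natDegree,
        BS (z ⊗ₜ[ℤ_[p]] (1 : AdjoinRoot P))
            (PairingAux.cf P i ⊗ₜ[ℤ_[p]] (AdjoinRoot.root P ^ i))
          = if i = 0 then 1 else 0 := by
      intro i hi
      rw [hBS, one_mul, hz,
        PairingAux.coord_cf P hmonic hn _ rfl (Finset.mem_range.1 hi)]
      split_ifs with h
      · subst h; simp
      · rw [zero_smul]
    rw [Finset.sum_congr rfl hterm, Finset.sum_ite_eq',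
      if_pos (by rw [Finset.mem_range]; omega)]
  have hee : BS (PairingAux.eE P) (PairingAux.eE P)
      = Polynomial.aeval (AdjoinRoot.root P) (Polynomial.derivative P) * w := by
    have h3 : BS (PairingAux.eE P) (PairingAux.eE P) = ∑ i ∈ Finset.range P.natDegree,
        BS (PairingAux.cf P i ⊗ₜ[ℤ_[p]] (AdjoinRoot.root P ^ i)) (PairingAux.eE P) := by
      nth_rewrite 1 [PairingAux.eE_def]
      rw [map_sum, LinearMap.sum_apply]
    have hterm : ∀ i ∈ Finset.range P.natDegree,
        BS (PairingAux.cf P i ⊗ₜ[ℤ_[p]] (AdjoinRoot.root P ^ i)) (PairingAux.eE P)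
          = PairingAux.cf P i * AdjoinRoot.root P ^ i * w := by
      intro i _
      have h2 : PairingAux.cf P i ⊗ₜ[ℤ_[p]] (AdjoinRoot.root P ^ i)
          = ((1 : AdjoinRoot P) ⊗ₜ[ℤ_[p]] (AdjoinRoot.root P ^ i))
            * (PairingAux.cf P i ⊗ₜ[ℤ_[p]] (1 : AdjoinRoot P)) := by
        rw [Algebra.TensorProduct.tmul_mul_tmul, one_mul, mul_one]
      rw [h2, hLs, hphi]
      ring
    rw [h3, Finset.sum_congr rfl hterm, ← Finset.sum_mul, PairingAux.sum_cf_mul P hg']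
  have hfin : BS (((u : AdjoinRoot P) ⊗ₜ[ℤ_[p]] (1 : AdjoinRoot P)) * PairingAux.eE P)
      (((u' : AdjoinRoot P) ⊗ₜ[ℤ_[p]] (1 : AdjoinRoot P)) * PairingAux.eE P)
      = ((u : AdjoinRoot P) * (u' : AdjoinRoot P) * w)
        * Polynomial.aeval (AdjoinRoot.root P) (Polynomial.derivative P) := by
    rw [hAdj, ← mul_assoc, Algebra.TensorProduct.tmul_mul_tmul, one_mul, hK, hRs, hee]
    ring
  rw [hfin]
  have hU : IsUnit ((u : AdjoinRoot P) * (u' : AdjoinRoot P) * w) :=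
    (u.isUnit.mul u'.isUnit).mul (IsUnit.of_mul_eq_one (a := w) z (by rw [mul_comm]; exact hzw))
  obtain ⟨v, hv⟩ := hU
  exact Associated.symm ⟨v, by rw [hv]; ring⟩
end

section
/- Let p be a prime, let P = X^g + a_{g−1}X^{g−1} + ⋯ + a_0 ∈ ℚ_p[X] be monic and irreducible of degree g ≥ 1 (set a_g = 1), let L = ℚ_p[X]/(P) (a field) with π the image of X, and set c_i := Σ_{k=i+1}^{g} a_k π^{k−i−1} ∈ L for 0 ≤ i ≤ g − 1. Let B : L × L → ℚ_p be a ℚ_p-bilinear form satisfying B(t·x, y) = B(x, t·y) for all t, x, y ∈ L. For m ∈ L set e(m) := Σ_{i=0}^{g−1} (c_i·m) ⊗ π^i ∈ L ⊗_{ℚ_p} L, and let B_L denote the L-valued extension of B determined by B_L(x ⊗ a, y ⊗ b) = B(x, y)·a·b. Then for all m, m′ ∈ L: Tr_{L/ℚ_p}( B_L(e(m), e(m′)) / P′(π) ) = Σ_{i=0}^{g−1} Tr_{L/ℚ_p}(π^i) · B(m, c_i·m′). -/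
open TensorProduct Polynomial

set_option maxHeartbeats 2000000 in
/-- Let `P ∈ ℚ_p[X]` be monic irreducible of degree `g ≥ 1`, let
`L = ℚ_p[X]/(P)` with `π` the image of `X`, set `c_i = Σ_{k=i+1}^{g} a_k π^{k-i-1}`, and
let `B` be a `ℚ_p`-bilinear form on `L` with `B(t·x, y) = B(x, t·y)`.  With
`e(m) = Σ_{i=0}^{g-1} (c_i·m) ⊗ π^i` and `B_L` the `L`-valued extension of `B`, for all
`m, m′ ∈ L`:
`Tr_{L/ℚ_p}(B_L(e(m), e(m′)) / P′(π)) = Σ_{i=0}^{g-1} Tr_{L/ℚ_p}(π^i) · B(m, c_i·m′)`. -/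
theorem trace_pairing_eigenvectors (p : ℕ) [Fact p.Prime] (g : ℕ) (hg : 1 ≤ g)
    (P : Polynomial ℚ_[p]) (hmonic : P.Monic) [hirr : Fact (Irreducible P)]
    (hdeg : P.natDegree = g)
    (c : ℕ → AdjoinRoot P)
    (hc : ∀ i, c i = ∑ k ∈ Finset.Icc (i + 1) g, P.coeff k • AdjoinRoot.root P ^ (k - i - 1))
    (B : AdjoinRoot P →ₗ[ℚ_[p]] AdjoinRoot P →ₗ[ℚ_[p]] ℚ_[p])
    (hsym : ∀ t x y : AdjoinRoot P, B (t * x) y = B x (t * y))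
    (e : AdjoinRoot P → AdjoinRoot P ⊗[ℚ_[p]] AdjoinRoot P)
    (he : ∀ m, e m = ∑ i ∈ Finset.range g, (c i * m) ⊗ₜ[ℚ_[p]] (AdjoinRoot.root P ^ i))
    (BL : (AdjoinRoot P ⊗[ℚ_[p]] AdjoinRoot P) →ₗ[ℚ_[p]]
      (AdjoinRoot P ⊗[ℚ_[p]] AdjoinRoot P) →ₗ[ℚ_[p]] AdjoinRoot P)
    (hBL : ∀ x a y b : AdjoinRoot P,
      BL (x ⊗ₜ[ℚ_[p]] a) (y ⊗ₜ[ℚ_[p]] b) = B x y • (a * b))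
    (m m' : AdjoinRoot P) :
    Algebra.trace ℚ_[p] (AdjoinRoot P)
        (BL (e m) (e m') / Polynomial.aeval (AdjoinRoot.root P) (Polynomial.derivative P)) =
      ∑ i ∈ Finset.range g,
        Algebra.trace ℚ_[p] (AdjoinRoot P) (AdjoinRoot.root P ^ i) * B m (c i * m') := by
  classical
  subst hdeg
  set n := P.natDegree with hn
  have hP0 : P ≠ 0 := hmonic.ne_zero
  have hmin : minpoly ℚ_[p] (AdjoinRoot.root P) = P := by
    rw [AdjoinRoot.minpoly_root hP0, hmonic.leadingCoeff, inv_one, map_one, mul_one]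
  have hint : IsIntegral ℚ_[p] (AdjoinRoot.root P) := AdjoinRoot.isIntegral_root hP0
  set d := Polynomial.aeval (AdjoinRoot.root P) (Polynomial.derivative P) with hd
  have hPzero : Polynomial.aeval (AdjoinRoot.root P) P = 0 := by
    rw [AdjoinRoot.aeval_eq, AdjoinRoot.mk_self]
  have hsep : P.Separable := hirr.out.separable
  have hd0 : d ≠ 0 := hsep.aeval_derivative_ne_zero hPzero
  let pb := AdjoinRoot.powerBasis hP0
  haveI : Module.Finite ℚ_[p] (AdjoinRoot P) := Module.Finite.of_basis pb.basis
  haveI : Algebra.IsSeparable ℚ_[p] (AdjoinRoot P) := inferInstance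
  have nd := traceForm_nondegenerate ℚ_[p] (AdjoinRoot P)
  set D := (Algebra.traceForm ℚ_[p] (AdjoinRoot P)).dualBasis nd pb.basis with hD
  -- the coefficients of minpolyDiv are the `c i`
  have hgdeg : (minpolyDiv ℚ_[p] (AdjoinRoot.root P)).natDegree + 1 = n := by
    rw [natDegree_minpolyDiv_succ hint, hmin]
  have hczero : ∀ i, n ≤ i → c i = 0 := by
    intro i hi
    rw [hc, Finset.Icc_eq_empty (by omega), Finset.sum_empty]
  have hcoeff : ∀ i, (minpolyDiv ℚ_[p] (AdjoinRoot.root P)).coeff i = c i := by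
    have key : ∀ N i, n ≤ i + N → (minpolyDiv ℚ_[p] (AdjoinRoot.root P)).coeff i = c i := by
      intro N
      induction N with
      | zero =>
        intro i hi
        simp only [Nat.add_zero] at hi
        rw [hczero i hi, Polynomial.coeff_eq_zero_of_natDegree_lt (by omega)]
      | succ N ih =>
        intro i hi
        by_cases h : n ≤ i
        · rw [hczero i h, Polynomial.coeff_eq_zero_of_natDegree_lt (by omega)]
        · rw [coeff_minpolyDiv, ih (i + 1) (by omega), hmin]
          rw [hc i, hc (i + 1)]
          rw [show Finset.Icc (i + 1) n = insert (i + 1) (Finset.Icc (i + 2) n) by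
            ext k; simp only [Finset.mem_Icc, Finset.mem_insert]; omega]
          rw [Finset.sum_insert (by simp)]
          congr 1
          · rw [show i + 1 - i - 1 = 0 by omega, pow_zero, Algebra.algebraMap_eq_smul_one]
          · rw [Finset.sum_mul]
            refine Finset.sum_congr rfl fun k hk => ?_
            rw [smul_mul_assoc, ← pow_succ]
            congr 2
            simp only [Finset.mem_Icc] at hk
            omega
    intro i
    exact key n i (by omega)
  have hDval : ∀ i : Fin pb.dim, D i = c ↑i / d := by
    intro i
    rw [hD, ← Module.Basis.traceDual_def, Module.Basis.traceDual_powerBasis_eq pb i, AdjoinRoot.powerBasis_gen, hmin, hcoeff]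
  -- key expansion
  have expand : ∀ x : AdjoinRoot P, ∑ i ∈ Finset.range n, Algebra.trace ℚ_[p] (AdjoinRoot P) (x * (AdjoinRoot.root P) ^ i) • c i = x * d := by
    intro x
    have h1 := D.sum_repr x
    have h2 : ∀ i : Fin pb.dim, D.repr x i = Algebra.trace ℚ_[p] (AdjoinRoot P) (x * (AdjoinRoot.root P) ^ (i : ℕ)) := by
      intro i
      rw [hD, LinearMap.BilinForm.dualBasis_repr_apply, Algebra.traceForm_apply,
        pb.basis_eq_pow, AdjoinRoot.powerBasis_gen]
    calc ∑ i ∈ Finset.range n, Algebra.trace ℚ_[p] (AdjoinRoot P) (x * (AdjoinRoot.root P) ^ i) • c i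
        = ∑ i : Fin pb.dim, Algebra.trace ℚ_[p] (AdjoinRoot P) (x * (AdjoinRoot.root P) ^ (i : ℕ)) • c ↑i :=
          (Fin.sum_univ_eq_sum_range (fun i => Algebra.trace ℚ_[p] (AdjoinRoot P) (x * (AdjoinRoot.root P) ^ i) • c i) n).symm
      _ = ∑ i : Fin pb.dim, (D.repr x i • D i) * d := by
          refine Finset.sum_congr rfl fun i _ => ?_
          rw [h2, hDval, smul_mul_assoc, div_mul_cancel₀ _ hd0]
      _ = x * d := by rw [← Finset.sum_mul, h1]
  -- sum c_i (AdjoinRoot.root P)^i = d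
  have hsum_c : ∑ i ∈ Finset.range n, c i * (AdjoinRoot.root P) ^ i = d := by
    have h3 : (minpolyDiv ℚ_[p] (AdjoinRoot.root P)).eval (AdjoinRoot.root P) = Polynomial.aeval (AdjoinRoot.root P) (derivative (minpoly ℚ_[p] (AdjoinRoot.root P))) :=
      eval_minpolyDiv_self
    rw [hmin] at h3
    rw [hd, ← h3, Polynomial.eval_eq_sum_range' (by omega : (minpolyDiv ℚ_[p] (AdjoinRoot.root P)).natDegree < n)]
    exact Finset.sum_congr rfl fun i _ => by rw [hcoeff]
  -- expand BL
  have hBLsum : BL (e m) (e m') = ∑ i ∈ Finset.range n, ∑ j ∈ Finset.range n,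
      B (c i * m) (c j * m') • ((AdjoinRoot.root P) ^ i * (AdjoinRoot.root P) ^ j) := by
    simp only [he, map_sum, LinearMap.sum_apply, hBL]
    rw [Finset.sum_comm]
  rw [hBLsum]
  have step1 : Algebra.trace ℚ_[p] (AdjoinRoot P) ((∑ i ∈ Finset.range n, ∑ j ∈ Finset.range n,
      B (c i * m) (c j * m') • ((AdjoinRoot.root P) ^ i * (AdjoinRoot.root P) ^ j)) / d)
      = ∑ i ∈ Finset.range n, ∑ j ∈ Finset.range n,
        B (c i * m) (c j * m') * Algebra.trace ℚ_[p] (AdjoinRoot P) (((AdjoinRoot.root P) ^ i * d⁻¹) * (AdjoinRoot.root P) ^ j) := by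
    rw [div_eq_mul_inv, Finset.sum_mul, map_sum]
    refine Finset.sum_congr rfl fun i _ => ?_
    rw [Finset.sum_mul, map_sum]
    refine Finset.sum_congr rfl fun j _ => ?_
    rw [smul_mul_assoc, map_smul, smul_eq_mul, mul_right_comm]
  rw [step1]
  have step2 : ∀ i, ∑ j ∈ Finset.range n, B (c i * m) (c j * m') * Algebra.trace ℚ_[p] (AdjoinRoot P) (((AdjoinRoot.root P) ^ i * d⁻¹) * (AdjoinRoot.root P) ^ j)
      = B m ((AdjoinRoot.root P) ^ i * (c i * m')) := by
    intro i
    calc ∑ j ∈ Finset.range n, B (c i * m) (c j * m') * Algebra.trace ℚ_[p] (AdjoinRoot P) (((AdjoinRoot.root P) ^ i * d⁻¹) * (AdjoinRoot.root P) ^ j)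
        = ∑ j ∈ Finset.range n, B m ((Algebra.trace ℚ_[p] (AdjoinRoot P) (((AdjoinRoot.root P) ^ i * d⁻¹) * (AdjoinRoot.root P) ^ j) • c j) * (c i * m')) := by
          refine Finset.sum_congr rfl fun j _ => ?_
          rw [hsym, mul_left_comm, smul_mul_assoc, map_smul, smul_eq_mul, mul_comm]
      _ = B m ((∑ j ∈ Finset.range n, Algebra.trace ℚ_[p] (AdjoinRoot P) (((AdjoinRoot.root P) ^ i * d⁻¹) * (AdjoinRoot.root P) ^ j) • c j) * (c i * m')) := by
          rw [Finset.sum_mul, map_sum]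
      _ = B m ((AdjoinRoot.root P) ^ i * (c i * m')) := by
          rw [expand, mul_assoc (AdjoinRoot.root P ^ i) d⁻¹ d, inv_mul_cancel₀ hd0, mul_one]
  calc ∑ i ∈ Finset.range n, ∑ j ∈ Finset.range n,
        B (c i * m) (c j * m') * Algebra.trace ℚ_[p] (AdjoinRoot P) (((AdjoinRoot.root P) ^ i * d⁻¹) * (AdjoinRoot.root P) ^ j)
      = ∑ i ∈ Finset.range n, B m ((AdjoinRoot.root P) ^ i * (c i * m')) := Finset.sum_congr rfl fun i _ => step2 i
    _ = B m ((∑ i ∈ Finset.range n, c i * (AdjoinRoot.root P) ^ i) * m') := by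
        rw [Finset.sum_mul, map_sum]
        exact Finset.sum_congr rfl fun i _ => by rw [mul_left_comm, mul_assoc]
    _ = B m ((∑ i ∈ Finset.range n, Algebra.trace ℚ_[p] (AdjoinRoot P) (1 * (AdjoinRoot.root P) ^ i) • c i) * m') := by rw [hsum_c, expand, one_mul]
    _ = ∑ i ∈ Finset.range n, Algebra.trace ℚ_[p] (AdjoinRoot P) ((AdjoinRoot.root P) ^ i) * B m (c i * m') := by
        rw [Finset.sum_mul, map_sum]
        exact Finset.sum_congr rfl fun i _ => by
          rw [one_mul, smul_mul_assoc, map_smul, smul_eq_mul]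
end

section
/- Let u, v, A, B, C, N ∈ ℚ with N ≠ 0, and suppose (u − B·v)·(u + B·v) + 4·N·A·C·v² = 1. Consider the 2 × 2 rational matrices W = [[0, −1], [N, 0]], M = [[u − B·v, −2·C·v], [2·N·A·v, u + B·v]], M′ = [[u − B·v, −2·A·v], [2·N·C·v, u + B·v]], and J = [[−1, 0], [0, 1]]. Then M′ is invertible and W · M · W⁻¹ = J · (M′)⁻¹ · J⁻¹. -/
/-- Let `u, v, A, B, C, N ∈ ℚ` with `N ≠ 0` and
`(u - Bv)(u + Bv) + 4NACv² = 1`.  With `W = [[0, -1], [N, 0]]`,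
`M = [[u - Bv, -2Cv], [2NAv, u + Bv]]`, `M′ = [[u - Bv, -2Av], [2NCv, u + Bv]]` and
`J = [[-1, 0], [0, 1]]`, the matrix `M′` is invertible and
`W · M · W⁻¹ = J · (M′)⁻¹ · J⁻¹`. -/
theorem atkin_lehner_matrix_identity (u v A B C N : ℚ) (hN : N ≠ 0)
    (h : (u - B * v) * (u + B * v) + 4 * N * A * C * v ^ 2 = 1)
    (W M M' J : Matrix (Fin 2) (Fin 2) ℚ)
    (hW : W = !![0, -1; N, 0])
    (hM : M = !![u - B * v, -2 * C * v; 2 * N * A * v, u + B * v])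
    (hM' : M' = !![u - B * v, -2 * A * v; 2 * N * C * v, u + B * v])
    (hJ : J = !![-1, 0; 0, 1]) :
    IsUnit M' ∧ W * M * W⁻¹ = J * M'⁻¹ * J⁻¹ := by
  have hdet : M'.det = 1 := by
    subst hM'
    simp [Matrix.det_fin_two_of]
    nlinarith [h]
  have hunit : IsUnit M' := (Matrix.isUnit_iff_isUnit_det M').mpr (by rw [hdet]; exact isUnit_one)
  refine ⟨hunit, ?_⟩
  have hM'inv : M'⁻¹ = !![u + B * v, 2 * A * v; -2 * N * C * v, u - B * v] := by
    apply Matrix.inv_eq_right_inv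
    subst hM'
    ext i j
    fin_cases i <;> fin_cases j <;>
      simp [Matrix.mul_apply, Fin.sum_univ_two] <;> nlinarith [h]
  have hWinv : W⁻¹ = !![0, 1/N; -1, 0] := by
    apply Matrix.inv_eq_right_inv
    subst hW
    ext i j
    fin_cases i <;> fin_cases j <;>
      simp [Matrix.mul_apply, Fin.sum_univ_two, hN]
  have hJinv : J⁻¹ = !![-1, 0; 0, 1] := by
    apply Matrix.inv_eq_right_inv
    subst hJ
    ext i j
    fin_cases i <;> fin_cases j <;> simp [Matrix.mul_apply, Fin.sum_univ_two]
  subst hW hM hJ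
  rw [hM'inv, hWinv, hJinv]
  ext i j
  fin_cases i <;> fin_cases j <;>
    simp [Matrix.mul_apply, Fin.sum_univ_two, hN] <;> field_simp <;> ring
end
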